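/- arXiv:1707.06296 — 3 statements merged into one kernel-verified Lean document; each statement's English description precedes it below -/
import Mathlib

section
/- Let Γ = (U, V, E) be a finite bipartite graph, let ε > 0, and suppose there are partitions U = U¹ ⊔ ⋯ ⊔ Uⁿ and V = V¹ ⊔ ⋯ ⊔ Vᵐ such that for all i, j the induced bipartite graph Γ[Uⁱ, Vʲ] = (Uⁱ, Vʲ, E ∩ (Uⁱ × Vʲ)) is ε-homogeneous of density w_{ij} ∈ [0,1]. Let W' : [0,1]² → [0,1] be the function taking the value w_{ij} on (⋃_{u_k ∈ Uⁱ} I_k) × (⋃_{v_l ∈ Vʲ} J_l). Then ‖W_Γ − W'‖_□ ≤ ε. -/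
open MeasureTheory Set
open scoped Classical

/-- The cut norm of a kernel: the supremum of `|∫_{S×T} W|` over measurable
`S, T ⊆ [0,1]`. -/
noncomputable def cutNorm (W : ℝ → ℝ → ℝ) : ℝ :=
  sSup { r : ℝ | ∃ S T : Set ℝ, MeasurableSet S ∧ MeasurableSet T ∧
    S ⊆ Set.Icc 0 1 ∧ T ⊆ Set.Icc 0 1 ∧
    r = |∫ p in S ×ˢ T, W p.1 p.2| }

/-- The `i`-th of `p` consecutive subintervals of `[0,1]` of equal length `1/p`,
half-open except that the last one is closed. -/
noncomputable def blockInterval (p i : ℕ) : Set ℝ :=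
  if i + 1 = p then Set.Icc ((i : ℝ) / p) ((i + 1 : ℝ) / p)
  else Set.Ico ((i : ℝ) / p) ((i + 1 : ℝ) / p)

/-- The stepfunction associated to a finite bipartite graph with parts `Fin p`, `Fin r`
and edge set `E`. -/
noncomputable def graphStep (p r : ℕ) (E : Finset (Fin p × Fin r)) : ℝ → ℝ → ℝ :=
  fun x y =>
    if ∃ i : Fin p, ∃ j : Fin r, (i, j) ∈ E ∧
        x ∈ blockInterval p i.val ∧ y ∈ blockInterval r j.val then 1 else 0

lemma Ico_subset_blockInterval (p i : ℕ) :
    Set.Ico ((i:ℝ)/p) ((i+1:ℝ)/p) ⊆ blockInterval p i := by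
  unfold blockInterval
  split
  · exact Set.Ico_subset_Icc_self
  · exact subset_rfl

lemma blockInterval_subset (p i : ℕ) :
    blockInterval p i ⊆ Set.Icc ((i:ℝ)/p) ((i+1:ℝ)/p) := by
  unfold blockInterval; split
  · exact subset_rfl
  · exact Set.Ico_subset_Icc_self

lemma measurableSet_blockInterval (p i : ℕ) : MeasurableSet (blockInterval p i) := by
  unfold blockInterval; split
  · exact measurableSet_Icc
  · exact measurableSet_Ico

lemma volume_blockInterval (p i : ℕ) :
    volume (blockInterval p i) = ENNReal.ofReal (1 / p) := by
  rcases Nat.eq_zero_or_pos p with hp | hp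
  · subst hp
    unfold blockInterval
    simp [Real.volume_Icc, Real.volume_Ico]
  have h : ((i:ℝ)+1)/p - (i:ℝ)/p = 1/p := by
    have : (p:ℝ) ≠ 0 := Nat.cast_ne_zero.2 hp.ne'
    field_simp
    ring
  unfold blockInterval
  split <;> simp [Real.volume_Icc, Real.volume_Ico, h]

lemma blockInterval_unique {p i j : ℕ} (hi : i < p) (hj : j < p) {x : ℝ}
    (hxi : x ∈ blockInterval p i) (hxj : x ∈ blockInterval p j) : i = j := by
  have key : ∀ i j : ℕ, i < j → j < p → ∀ x : ℝ,
      x ∈ blockInterval p i → x ∈ blockInterval p j → False := by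
    intro i j hij hj x hxi hxj
    have hpn : 0 < p := by omega
    have hp0 : (0:ℝ) < p := by exact_mod_cast hpn
    have hjx : (j:ℝ)/p ≤ x := (blockInterval_subset p j hxj).1
    have hne : i + 1 ≠ p := by omega
    unfold blockInterval at hxi
    rw [if_neg hne] at hxi
    have h1 : x < ((i:ℝ)+1)/p := hxi.2
    have h2 : ((i:ℝ)+1)/p ≤ (j:ℝ)/p := by
      gcongr
      exact_mod_cast hij
    linarith
  rcases lt_trichotomy i j with h | h | h
  · exact absurd (key i j h hj x hxi hxj) not_false
  · exact h
  · exact absurd (key j i h hi x hxj hxi) not_false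

lemma exists_blockInterval (p : ℕ) (hp : 0 < p) {x : ℝ} (hx : x ∈ Set.Icc (0:ℝ) 1) :
    ∃ i : Fin p, x ∈ blockInterval p i.val := by
  have hp0 : (0:ℝ) < p := Nat.cast_pos.2 hp
  rcases eq_or_lt_of_le hx.2 with h1 | h1
  · refine ⟨⟨p-1, Nat.sub_lt hp one_pos⟩, ?_⟩
    have hq : (p-1) + 1 = p := Nat.succ_pred_eq_of_pos hp
    have hc : ((p-1 : ℕ):ℝ) + 1 = p := by
      rw [Nat.cast_sub hp]; push_cast; ring
    show x ∈ blockInterval p (p-1)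
    subst h1
    unfold blockInterval
    rw [if_pos hq]
    constructor
    · rw [div_le_one hp0]
      nlinarith [hc]
    · rw [hc, le_div_iff₀ hp0]; linarith
  · set i := ⌊x * p⌋₊ with hi
    have h0 : 0 ≤ x * p := mul_nonneg hx.1 hp0.le
    have hle : (i:ℝ) ≤ x * p := Nat.floor_le h0
    have hlt : x * p < i + 1 := Nat.lt_floor_add_one _
    have hip : i < p := by
      have hxp : x * p < p := by nlinarith
      have : (i:ℝ) < p := lt_of_le_of_lt hle hxp
      exact_mod_cast this
    refine ⟨⟨i, hip⟩, Ico_subset_blockInterval p i ⟨?_, ?_⟩⟩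
    · rw [div_le_iff₀ hp0]; linarith
    · rw [lt_div_iff₀ hp0]; linarith

lemma graphStep_eq {p r : ℕ} (E : Finset (Fin p × Fin r)) {u : Fin p} {v : Fin r}
    {x y : ℝ} (hx : x ∈ blockInterval p u.val) (hy : y ∈ blockInterval r v.val) :
    graphStep p r E x y = if (u, v) ∈ E then 1 else 0 := by
  unfold graphStep
  by_cases h : (u,v) ∈ E
  · rw [if_pos ⟨u, v, h, hx, hy⟩, if_pos h]
  · rw [if_neg, if_neg h]
    rintro ⟨i, j, hij, hxi, hyj⟩
    have h1 : i.val = u.val := blockInterval_unique i.2 u.2 hxi hx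
    have h2 : j.val = v.val := blockInterval_unique j.2 v.2 hyj hy
    exact h (by rwa [← Fin.ext h1, ← Fin.ext h2])

lemma abs_weighted_le {ι : Type*} [Fintype ι] (g : ι → ℝ) (M : ℝ) (a : ι → ℝ)
    (h0 : ∀ u, 0 ≤ a u) (h1 : ∀ u, a u ≤ 1)
    (hM : ∀ A : Finset ι, |∑ u ∈ A, g u| ≤ M) :
    |∑ u, a u * g u| ≤ M := by
  rw [abs_le]
  constructor
  · set N := Finset.univ.filter fun u => g u ≤ 0 with hN
    have hMN := hM N
    have step1 : ∑ u ∈ N, g u ≤ ∑ u ∈ N, a u * g u := by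
      apply Finset.sum_le_sum
      intro u hu
      have hg : g u ≤ 0 := (Finset.mem_filter.1 hu).2
      nlinarith [h0 u, h1 u]
    have step2 : ∑ u ∈ N, a u * g u ≤ ∑ u, a u * g u := by
      rw [← Finset.sum_filter_add_sum_filter_not Finset.univ (fun u => g u ≤ 0)
        (fun u => a u * g u)]
      have : 0 ≤ ∑ u ∈ Finset.univ.filter (fun u => ¬ g u ≤ 0), a u * g u := by
        apply Finset.sum_nonneg
        intro u hu
        have : 0 ≤ g u := le_of_lt (not_le.1 (Finset.mem_filter.1 hu).2)
        exact mul_nonneg (h0 u) this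
      linarith
    have := neg_abs_le (∑ u ∈ N, g u)
    linarith
  · set Pp := Finset.univ.filter fun u => 0 ≤ g u with hP
    have hMP := hM Pp
    have step1 : ∑ u, a u * g u ≤ ∑ u ∈ Pp, a u * g u := by
      rw [← Finset.sum_filter_add_sum_filter_not Finset.univ (fun u => 0 ≤ g u)
        (fun u => a u * g u)]
      have : ∑ u ∈ Finset.univ.filter (fun u => ¬ 0 ≤ g u), a u * g u ≤ 0 := by
        apply Finset.sum_nonpos
        intro u hu
        have : g u ≤ 0 := le_of_lt (not_le.1 (Finset.mem_filter.1 hu).2)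
        exact mul_nonpos_of_nonneg_of_nonpos (h0 u) this
      linarith
    have step2 : ∑ u ∈ Pp, a u * g u ≤ ∑ u ∈ Pp, g u := by
      apply Finset.sum_le_sum
      intro u hu
      have hg : 0 ≤ g u := (Finset.mem_filter.1 hu).2
      nlinarith [h0 u, h1 u]
    have := le_abs_self (∑ u ∈ Pp, g u)
    linarith

lemma abs_weighted2_le {ι κ : Type*} [Fintype ι] [Fintype κ] (c : ι → κ → ℝ) (M : ℝ)
    (a : ι → ℝ) (b : κ → ℝ)
    (ha0 : ∀ u, 0 ≤ a u) (ha1 : ∀ u, a u ≤ 1) (hb0 : ∀ v, 0 ≤ b v) (hb1 : ∀ v, b v ≤ 1)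
    (hM : ∀ (A : Finset ι) (B : Finset κ), |∑ u ∈ A, ∑ v ∈ B, c u v| ≤ M) :
    |∑ u, ∑ v, a u * b v * c u v| ≤ M := by
  have hrw : ∀ u, ∑ v, a u * b v * c u v = a u * ∑ v, b v * c u v := by
    intro u; rw [Finset.mul_sum]; exact Finset.sum_congr rfl fun v _ => by ring
  simp only [hrw]
  apply abs_weighted_le _ M a ha0 ha1
  intro A
  have hrw2 : ∑ u ∈ A, ∑ v, b v * c u v = ∑ v, b v * ∑ u ∈ A, c u v := by
    rw [Finset.sum_comm]
    exact Finset.sum_congr rfl fun v _ => by rw [Finset.mul_sum]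
  rw [hrw2]
  apply abs_weighted_le _ M b hb0 hb1
  intro B
  rw [Finset.sum_comm]
  exact hM A B


/-- If there exist partitions of the two vertex sets (encoded by labelling maps
`P : Fin p → Fin n` and `Q : Fin r → Fin m`) such that each induced bipartite graph
`Γ[Uⁱ, Vʲ]` is `ε`-homogeneous of density `w i j`, then the stepfunction of `Γ` is
within `ε` of the corresponding stepfunction `W'` in the cut norm. -/
theorem stmt_3 (p r n m : ℕ) (hp : 0 < p) (hr : 0 < r)
    (E : Finset (Fin p × Fin r)) (ε : ℝ) (hε : 0 < ε)
    (P : Fin p → Fin n) (Q : Fin r → Fin m)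
    (w : Fin n → Fin m → ℝ) (hw : ∀ i j, w i j ∈ Set.Icc (0 : ℝ) 1)
    (hhom : ∀ i j, ∀ A : Finset (Fin p), ∀ B : Finset (Fin r),
      (∀ u ∈ A, P u = i) → (∀ v ∈ B, Q v = j) →
      |((E.filter (fun q => q.1 ∈ A ∧ q.2 ∈ B)).card : ℝ)
          - w i j * A.card * B.card|
        ≤ ε * ((Finset.univ.filter (fun u : Fin p => P u = i)).card : ℝ)
            * ((Finset.univ.filter (fun v : Fin r => Q v = j)).card : ℝ))
    (W' : ℝ → ℝ → ℝ)
    (hW' : ∀ (u : Fin p) (v : Fin r), ∀ x ∈ blockInterval p u.val,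
      ∀ y ∈ blockInterval r v.val, W' x y = w (P u) (Q v)) :
    cutNorm (fun x y => graphStep p r E x y - W' x y) ≤ ε := by
  classical
  have hp0 : (0:ℝ) < p := Nat.cast_pos.2 hp
  have hr0 : (0:ℝ) < r := Nat.cast_pos.2 hr
  set c : Fin p → Fin r → ℝ :=
    fun u v => (if (u,v) ∈ E then 1 else 0) - w (P u) (Q v) with hcdef
  -- combinatorial bound
  have comb : ∀ (A : Finset (Fin p)) (B : Finset (Fin r)),
      |∑ u ∈ A, ∑ v ∈ B, c u v| ≤ ε * p * r := by
    intro A B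
    have expand : ∑ u ∈ A, ∑ v ∈ B, c u v
        = ∑ i : Fin n, ∑ j : Fin m,
            ∑ u ∈ A.filter (fun u => P u = i), ∑ v ∈ B.filter (fun v => Q v = j), c u v := by
      rw [← Finset.sum_fiberwise_of_maps_to (t := Finset.univ)
        (fun u _ => Finset.mem_univ (P u)) (fun u => ∑ v ∈ B, c u v)]
      apply Finset.sum_congr rfl
      intro i _
      calc ∑ u ∈ A.filter (fun u => P u = i), ∑ v ∈ B, c u v
          = ∑ u ∈ A.filter (fun u => P u = i), ∑ j : Fin m,
              ∑ v ∈ B.filter (fun v => Q v = j), c u v :=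
            Finset.sum_congr rfl fun u _ =>
              (Finset.sum_fiberwise_of_maps_to (t := Finset.univ)
                (fun v _ => Finset.mem_univ (Q v)) (fun v => c u v)).symm
        _ = ∑ j : Fin m, ∑ u ∈ A.filter (fun u => P u = i),
              ∑ v ∈ B.filter (fun v => Q v = j), c u v := Finset.sum_comm
    have block : ∀ (i : Fin n) (j : Fin m),
        ∑ u ∈ A.filter (fun u => P u = i), ∑ v ∈ B.filter (fun v => Q v = j), c u v
        = ((E.filter (fun q => q.1 ∈ A.filter (fun u => P u = i)
              ∧ q.2 ∈ B.filter (fun v => Q v = j))).card : ℝ)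
          - w i j * (A.filter (fun u => P u = i)).card
              * (B.filter (fun v => Q v = j)).card := by
      intro i j
      set Ai := A.filter (fun u => P u = i) with hAi
      set Bj := B.filter (fun v => Q v = j) with hBj
      have hcval : ∀ u ∈ Ai, ∀ v ∈ Bj,
          c u v = (if (u,v) ∈ E then (1:ℝ) else 0) - w i j := by
        intro u hu v hv
        have hPu : P u = i := (Finset.mem_filter.1 hu).2
        have hQv : Q v = j := (Finset.mem_filter.1 hv).2
        simp only [hcdef, hPu, hQv]
      have e1 : ∑ u ∈ Ai, ∑ v ∈ Bj, c u v
          = (∑ u ∈ Ai, ∑ v ∈ Bj, (if (u,v) ∈ E then (1:ℝ) else 0))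
            - (Ai.card : ℝ) * (Bj.card : ℝ) * w i j := by
        rw [Finset.sum_congr rfl (fun u hu => Finset.sum_congr rfl (fun v hv => hcval u hu v hv))]
        rw [Finset.sum_congr rfl (fun u (hu : u ∈ Ai) => Finset.sum_sub_distrib _ _)]
        rw [Finset.sum_sub_distrib]
        simp only [Finset.sum_sub_distrib, Finset.sum_const, nsmul_eq_mul]
        ring
      have e2 : ∑ u ∈ Ai, ∑ v ∈ Bj, (if (u,v) ∈ E then (1:ℝ) else 0)
          = ((E.filter (fun q => q.1 ∈ Ai ∧ q.2 ∈ Bj)).card : ℝ) := by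
        rw [← Finset.sum_product' Ai Bj (fun u v => if (u,v) ∈ E then (1:ℝ) else 0)]
        have : ∀ q ∈ Ai ×ˢ Bj, (if (q.1, q.2) ∈ E then (1:ℝ) else 0)
            = (if q ∈ E then (1:ℝ) else 0) := by
          intro q _; rcases q with ⟨u, v⟩; rfl
        rw [Finset.sum_congr rfl this, Finset.sum_boole]
        congr 1
        have hseteq : (Ai ×ˢ Bj).filter (fun q => q ∈ E)
            = E.filter (fun q => q.1 ∈ Ai ∧ q.2 ∈ Bj) := by
          ext q
          simp only [Finset.mem_filter, Finset.mem_product]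
          tauto
        rw [hseteq]
      rw [e1, e2]; ring
    rw [expand]
    have tri : |∑ i : Fin n, ∑ j : Fin m,
        ∑ u ∈ A.filter (fun u => P u = i), ∑ v ∈ B.filter (fun v => Q v = j), c u v|
        ≤ ∑ i : Fin n, ∑ j : Fin m,
            ε * ((Finset.univ.filter (fun u : Fin p => P u = i)).card : ℝ)
              * ((Finset.univ.filter (fun v : Fin r => Q v = j)).card : ℝ) := by
      refine (Finset.abs_sum_le_sum_abs _ _).trans (Finset.sum_le_sum fun i _ => ?_)
      refine (Finset.abs_sum_le_sum_abs _ _).trans (Finset.sum_le_sum fun j _ => ?_)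
      rw [block i j]
      exact hhom i j _ _ (fun u hu => (Finset.mem_filter.1 hu).2)
        (fun v hv => (Finset.mem_filter.1 hv).2)
    refine tri.trans (le_of_eq ?_)
    have hcardP : ∑ i : Fin n, ((Finset.univ.filter (fun u : Fin p => P u = i)).card : ℝ)
        = p := by
      rw [← Nat.cast_sum]
      norm_cast
      rw [← Finset.card_eq_sum_card_fiberwise (fun u _ => Finset.mem_univ (P u))]
      simp
    have hcardQ : ∑ j : Fin m, ((Finset.univ.filter (fun v : Fin r => Q v = j)).card : ℝ)
        = r := by
      rw [← Nat.cast_sum]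
      norm_cast
      rw [← Finset.card_eq_sum_card_fiberwise (fun v _ => Finset.mem_univ (Q v))]
      simp
    have h1 : ∀ i : Fin n, ∑ j : Fin m,
        ε * ((Finset.univ.filter (fun u : Fin p => P u = i)).card : ℝ)
          * ((Finset.univ.filter (fun v : Fin r => Q v = j)).card : ℝ)
        = ((Finset.univ.filter (fun u : Fin p => P u = i)).card : ℝ) * (ε * r) := by
      intro i
      rw [← Finset.mul_sum, hcardQ]
      ring
    rw [Finset.sum_congr rfl fun i _ => h1 i, ← Finset.sum_mul, hcardP]
    ring
  -- main part
  apply Real.sSup_le _ hε.le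
  rintro x ⟨S, T, hS, hT, hSsub, hTsub, rfl⟩
  show |∫ q in S ×ˢ T, (graphStep p r E q.1 q.2 - W' q.1 q.2)| ≤ ε
  set a : Fin p → ℝ := fun u => (volume (S ∩ blockInterval p u.val)).toReal with hadef
  set b : Fin r → ℝ := fun v => (volume (T ∩ blockInterval r v.val)).toReal with hbdef
  set pieces : Fin p × Fin r → Set (ℝ × ℝ) :=
    fun uv => (S ∩ blockInterval p uv.1.val) ×ˢ (T ∩ blockInterval r uv.2.val) with hpieces
  have hmeas : ∀ uv : Fin p × Fin r, MeasurableSet (pieces uv) := fun uv =>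
    (hS.inter (measurableSet_blockInterval p uv.1.val)).prod
      (hT.inter (measurableSet_blockInterval r uv.2.val))
  have hvol : ∀ uv : Fin p × Fin r,
      volume (pieces uv) = volume (S ∩ blockInterval p uv.1.val)
        * volume (T ∩ blockInterval r uv.2.val) := by
    intro uv
    rw [hpieces]
    rw [Measure.volume_eq_prod, Measure.prod_prod]
  have hμS : ∀ u : Fin p, volume (S ∩ blockInterval p u.val) ≤ ENNReal.ofReal (1/(p:ℝ)) :=
    fun u => le_of_le_of_eq (measure_mono inter_subset_right) (volume_blockInterval p u.val)
  have hμT : ∀ v : Fin r, volume (T ∩ blockInterval r v.val) ≤ ENNReal.ofReal (1/(r:ℝ)) :=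
    fun v => le_of_le_of_eq (measure_mono inter_subset_right) (volume_blockInterval r v.val)
  have hfin : ∀ uv : Fin p × Fin r, volume (pieces uv) < ⊤ := by
    intro uv
    rw [hvol uv]
    exact ENNReal.mul_lt_top ((hμS uv.1).trans_lt ENNReal.ofReal_lt_top)
      ((hμT uv.2).trans_lt ENNReal.ofReal_lt_top)
  have hval : ∀ uv : Fin p × Fin r,
      Set.EqOn (fun q : ℝ × ℝ => graphStep p r E q.1 q.2 - W' q.1 q.2)
        (fun _ => c uv.1 uv.2) (pieces uv) := by
    rintro ⟨u, v⟩ ⟨x, y⟩ ⟨⟨hxS, hxu⟩, ⟨hyT, hyv⟩⟩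
    show graphStep p r E x y - W' x y = c u v
    rw [graphStep_eq E hxu hyv, hW' u v x hxu y hyv]
  have hInt : ∀ uv ∈ (Finset.univ : Finset (Fin p × Fin r)),
      IntegrableOn (fun q : ℝ × ℝ => graphStep p r E q.1 q.2 - W' q.1 q.2)
        (pieces uv) volume := by
    intro uv _
    exact (integrableOn_const (hfin uv).ne).congr_fun (hval uv).symm (hmeas uv)
  have hcover : S ×ˢ T = ⋃ uv ∈ (Finset.univ : Finset (Fin p × Fin r)), pieces uv := by
    ext ⟨x, y⟩
    simp only [Set.mem_prod, Set.mem_iUnion, Finset.mem_univ, exists_true_left,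
      Set.mem_inter_iff, hpieces]
    constructor
    · rintro ⟨hxS, hyT⟩
      obtain ⟨u, hu⟩ := exists_blockInterval p hp (hSsub hxS)
      obtain ⟨v, hv⟩ := exists_blockInterval r hr (hTsub hyT)
      exact ⟨(u, v), ⟨hxS, hu⟩, ⟨hyT, hv⟩⟩
    · rintro ⟨⟨u, v⟩, ⟨hxS, _⟩, ⟨hyT, _⟩⟩
      exact ⟨hxS, hyT⟩
  have hdisj : ((Finset.univ : Finset (Fin p × Fin r)) : Set (Fin p × Fin r)).Pairwise
      (Function.onFun Disjoint pieces) := by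
    rintro ⟨u, v⟩ - ⟨u', v'⟩ - hne
    change Disjoint (pieces (u, v)) (pieces (u', v'))
    rw [Set.disjoint_left]
    rintro ⟨x, y⟩ ⟨⟨_, hxu⟩, ⟨_, hyv⟩⟩ ⟨⟨_, hxu'⟩, ⟨_, hyv'⟩⟩
    apply hne
    have h1 : u = u' := Fin.ext (blockInterval_unique u.2 u'.2 hxu hxu')
    have h2 : v = v' := Fin.ext (blockInterval_unique v.2 v'.2 hyv hyv')
    rw [h1, h2]
  have hint : ∫ q in S ×ˢ T, (graphStep p r E q.1 q.2 - W' q.1 q.2)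
      = ∑ u : Fin p, ∑ v : Fin r, a u * b v * c u v := by
    rw [hcover, integral_biUnion_finset Finset.univ (fun uv _ => hmeas uv) hdisj hInt]
    have : ∀ uv : Fin p × Fin r,
        ∫ q in pieces uv, (graphStep p r E q.1 q.2 - W' q.1 q.2)
          = a uv.1 * b uv.2 * c uv.1 uv.2 := by
      intro uv
      rw [setIntegral_congr_fun (hmeas uv) (hval uv), setIntegral_const,
        Measure.real, hvol uv, ENNReal.toReal_mul, smul_eq_mul]
    rw [Finset.sum_congr rfl (fun uv _ => this uv)]
    exact Fintype.sum_prod_type _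
  rw [hint]
  -- final bound
  have ha0 : ∀ u, 0 ≤ (p:ℝ) * a u := fun u => mul_nonneg hp0.le ENNReal.toReal_nonneg
  have ha1 : ∀ u, (p:ℝ) * a u ≤ 1 := by
    intro u
    have : a u ≤ 1/(p:ℝ) := ENNReal.toReal_le_of_le_ofReal
      (by positivity) (hμS u)
    calc (p:ℝ) * a u ≤ (p:ℝ) * (1/(p:ℝ)) := by nlinarith
    _ = 1 := by field_simp
  have hb0 : ∀ v, 0 ≤ (r:ℝ) * b v := fun v => mul_nonneg hr0.le ENNReal.toReal_nonneg
  have hb1 : ∀ v, (r:ℝ) * b v ≤ 1 := by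
    intro v
    have : b v ≤ 1/(r:ℝ) := ENNReal.toReal_le_of_le_ofReal
      (by positivity) (hμT v)
    calc (r:ℝ) * b v ≤ (r:ℝ) * (1/(r:ℝ)) := by nlinarith
    _ = 1 := by field_simp
  have key := abs_weighted2_le c (ε*p*r) (fun u => (p:ℝ) * a u) (fun v => (r:ℝ) * b v)
    ha0 ha1 hb0 hb1 comb
  have hscale : ∑ u : Fin p, ∑ v : Fin r, ((p:ℝ) * a u) * ((r:ℝ) * b v) * c u v
      = ((p:ℝ) * r) * ∑ u : Fin p, ∑ v : Fin r, a u * b v * c u v := by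
    rw [Finset.mul_sum]
    apply Finset.sum_congr rfl
    intro u _
    rw [Finset.mul_sum]
    exact Finset.sum_congr rfl fun v _ => by ring
  rw [hscale, abs_mul, abs_of_pos (mul_pos hp0 hr0)] at key
  have hεpr : ε * p * r = ((p:ℝ) * r) * ε := by ring
  rw [hεpr] at key
  exact le_of_mul_le_mul_left key (mul_pos hp0 hr0)
end

section
/- Let ε > 0, let (y_i)_{i∈ℕ} be an orthonormal family in L²[0,1], and let (σ_i)_{i∈ℕ} be positive reals with ∑_i σ_i² ≤ 1, such that each y_i is essentially bounded with ‖y_i‖_{L∞} ≤ 1/σ_i and σ_i < ε for every i. Then for every g ∈ L¹[0,1] ∩ L²[0,1], the series ∑_i σ_i⁶ ⟨g, y_i⟩ y_i(x) converges absolutely for almost every x, and its sum h satisfies ‖h‖_{L∞[0,1]} ≤ ε² ‖g‖_{L¹[0,1]}. -/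
open MeasureTheory Set
open scoped ENNReal NNReal

/-- Tail bound for the small singular values: if `(y_i)` is orthonormal in `L²[0,1]`
with `‖y_i‖_∞ ≤ 1/σ_i`, `∑ σ_i² ≤ 1` and `σ_i < ε` for all `i`, then for every
`g ∈ L¹ ∩ L²`, the series `∑_i σ_i⁶ ⟨g, y_i⟩ y_i(x)` converges absolutely a.e. and
its sum `h` satisfies `‖h‖_∞ ≤ ε² ‖g‖₁`. -/
theorem stmt_10 (ε : ℝ) (hε : 0 < ε) (y : ℕ → ℝ → ℝ) (σ : ℕ → ℝ)
    (hy2 : ∀ i, MemLp (y i) 2 (volume.restrict (Set.Icc (0:ℝ) 1)))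
    (horth : ∀ i j, (∫ t in Set.Icc (0:ℝ) 1, y i t * y j t)
      = if i = j then (1:ℝ) else 0)
    (hσpos : ∀ i, 0 < σ i)
    (hσsum : Summable (fun i => σ i ^ 2)) (hσ1 : ∑' i, σ i ^ 2 ≤ 1)
    (hyb : ∀ i, eLpNorm (y i) ⊤ (volume.restrict (Set.Icc (0:ℝ) 1))
      ≤ ENNReal.ofReal (1 / σ i))
    (hσε : ∀ i, σ i < ε)
    (g : ℝ → ℝ)
    (hg1 : MemLp g 1 (volume.restrict (Set.Icc (0:ℝ) 1)))
    (hg2 : MemLp g 2 (volume.restrict (Set.Icc (0:ℝ) 1))) :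
    (∀ᵐ x ∂(volume.restrict (Set.Icc (0:ℝ) 1)),
      Summable fun i => |σ i ^ 6 * (∫ t in Set.Icc (0:ℝ) 1, g t * y i t) * y i x|) ∧
    eLpNorm
        (fun x => ∑' i, σ i ^ 6 * (∫ t in Set.Icc (0:ℝ) 1, g t * y i t) * y i x)
        ⊤ (volume.restrict (Set.Icc (0:ℝ) 1))
      ≤ ENNReal.ofReal (ε ^ 2) * eLpNorm g 1 (volume.restrict (Set.Icc (0:ℝ) 1)) := by
  set μ := volume.restrict (Set.Icc (0:ℝ) 1) with hμ
  have hgi : Integrable g μ := memLp_one_iff_integrable.mp hg1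
  set C : ℝ := ∫ t, |g t| ∂μ with hCdef
  have hC0 : 0 ≤ C := integral_nonneg fun t => abs_nonneg _
  -- a.e. bound for y i
  have hyae : ∀ i, ∀ᵐ x ∂μ, |y i x| ≤ 1 / σ i := by
    intro i
    have h1 : ∀ᵐ x ∂μ, (‖y i x‖₊ : ℝ≥0∞) ≤ eLpNormEssSup (y i) μ :=
      enorm_ae_le_eLpNormEssSup (y i) μ
    have h2 := (hyb i)
    rw [eLpNorm_exponent_top] at h2
    filter_upwards [h1] with x hx
    have hx2 : (‖y i x‖₊ : ℝ≥0∞) ≤ ENNReal.ofReal (1 / σ i) := hx.trans h2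
    have hσi := hσpos i
    have : ENNReal.ofReal ‖y i x‖ ≤ ENNReal.ofReal (1 / σ i) := by
      rwa [ofReal_norm]
    have := (ENNReal.ofReal_le_ofReal_iff (by positivity)).mp this
    simpa [Real.norm_eq_abs] using this
  -- integral bound
  have hcoef : ∀ i, |∫ t in Set.Icc (0:ℝ) 1, g t * y i t| ≤ C / σ i := by
    intro i
    have hb : ∀ᵐ t ∂μ, ‖g t * y i t‖ ≤ |g t| * (1 / σ i) := by
      filter_upwards [hyae i] with t ht
      rw [Real.norm_eq_abs, abs_mul]
      exact mul_le_mul_of_nonneg_left ht (abs_nonneg _)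
    have hdom : Integrable (fun t => |g t| * (1 / σ i)) μ := (hgi.abs.mul_const _)
    have hint : Integrable (fun t => g t * y i t) μ :=
      hdom.mono' (hg1.aestronglyMeasurable.mul (hy2 i).aestronglyMeasurable) hb
    calc |∫ t, g t * y i t ∂μ| ≤ ∫ t, ‖g t * y i t‖ ∂μ := by
          rw [← Real.norm_eq_abs]; exact norm_integral_le_integral_norm _
      _ ≤ ∫ t, |g t| * (1 / σ i) ∂μ := integral_mono_ae hint.norm hdom hb -- hb is ae, fix
      _ = C * (1 / σ i) := by rw [integral_mul_const]
      _ = C / σ i := by ring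
  -- pointwise bound on terms
  have hterm : ∀ᵐ x ∂μ, ∀ i,
      |σ i ^ 6 * (∫ t in Set.Icc (0:ℝ) 1, g t * y i t) * y i x| ≤ σ i ^ 4 * C := by
    rw [ae_all_iff]
    intro i
    filter_upwards [hyae i] with x hx
    have h1 := hcoef i
    have hσ := hσpos i
    calc |σ i ^ 6 * (∫ t in Set.Icc (0:ℝ) 1, g t * y i t) * y i x|
        = σ i ^ 6 * |∫ t in Set.Icc (0:ℝ) 1, g t * y i t| * |y i x| := by
          rw [abs_mul, abs_mul, abs_pow, abs_of_pos hσ]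
      _ ≤ σ i ^ 6 * (C / σ i) * (1 / σ i) := by
          gcongr
      _ = σ i ^ 4 * C := by field_simp
  have hpt4 : ∀ i, σ i ^ 4 ≤ ε ^ 2 * σ i ^ 2 := by
    intro i
    have hσ := hσpos i
    have h2 : σ i ^ 2 ≤ ε ^ 2 := pow_le_pow_left₀ hσ.le (hσε i).le 2
    nlinarith [sq_nonneg (σ i)]
  have hσ4sum : Summable (fun i => σ i ^ 4) :=
    Summable.of_nonneg_of_le (fun i => by positivity) hpt4 (hσsum.mul_left _)
  have hσ4le : (∑' i, σ i ^ 4) ≤ ε ^ 2 := by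
    calc (∑' i, σ i ^ 4) ≤ ∑' i, ε ^ 2 * σ i ^ 2 :=
          hσ4sum.tsum_le_tsum hpt4 (hσsum.mul_left _)
      _ = ε ^ 2 * ∑' i, σ i ^ 2 := tsum_mul_left
      _ ≤ ε ^ 2 * 1 := by gcongr
      _ = ε ^ 2 := mul_one _
  have hbsum : Summable (fun i => σ i ^ 4 * C) := hσ4sum.mul_right C
  have hsummable : ∀ᵐ x ∂μ,
      Summable fun i => |σ i ^ 6 * (∫ t in Set.Icc (0:ℝ) 1, g t * y i t) * y i x| := by
    filter_upwards [hterm] with x hx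
    exact Summable.of_nonneg_of_le (fun i => abs_nonneg _) hx hbsum
  refine ⟨hsummable, ?_⟩
  have htsum : ∀ᵐ x ∂μ,
      ‖∑' i, σ i ^ 6 * (∫ t in Set.Icc (0:ℝ) 1, g t * y i t) * y i x‖ ≤ ε ^ 2 * C := by
    filter_upwards [hterm, hsummable] with x hx hsx
    calc ‖∑' i, σ i ^ 6 * (∫ t in Set.Icc (0:ℝ) 1, g t * y i t) * y i x‖
        ≤ ∑' i, |σ i ^ 6 * (∫ t in Set.Icc (0:ℝ) 1, g t * y i t) * y i x| := by
          refine (norm_tsum_le_tsum_norm ?_).trans_eq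
            (tsum_congr fun i => Real.norm_eq_abs _)
          simpa only [Real.norm_eq_abs] using hsx
      _ ≤ ∑' i, σ i ^ 4 * C := hsx.tsum_le_tsum hx hbsum
      _ = (∑' i, σ i ^ 4) * C := tsum_mul_right
      _ ≤ ε ^ 2 * C := by gcongr
  have := eLpNormEssSup_le_of_ae_bound htsum
  rw [eLpNorm_exponent_top]
  calc eLpNormEssSup _ μ ≤ ENNReal.ofReal (ε ^ 2 * C) := this
    _ = ENNReal.ofReal (ε ^ 2) * ENNReal.ofReal C := ENNReal.ofReal_mul (by positivity)
    _ ≤ ENNReal.ofReal (ε ^ 2) * eLpNorm g 1 μ := by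
        gcongr
        rw [eLpNorm_one_eq_lintegral_enorm, ← ofReal_integral_norm_eq_lintegral_enorm hgi]
        simp [hCdef, Real.norm_eq_abs]
end

section
/- For every ε > 0 there exists Q such that for every finite field F of odd cardinality q ≥ Q and all subsets A, B ⊆ F, one has | |{(x,y) ∈ A × B : ∃ z ∈ F, x + y = z²}| − (1/2)|A||B| | ≤ ε q². In other words, the bipartite graphs on F × F with edge relation 'x + y is a square' are ε-homogeneous of density 1/2 for all sufficiently large odd q. -/
open scoped Classical

open Finset in
private lemma qc_shift {F : Type} [Field F] [Fintype F] [DecidableEq F]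
    (hF : ringChar F ≠ 2) {c : F} (hc : c ≠ 0) :
    ∑ x : F, quadraticChar F x * quadraticChar F (x + c) = -1 := by
  have key : ∀ x : F, x ≠ 0 →
      quadraticChar F x * quadraticChar F (x + c)
        = quadraticChar F (1 + c * x⁻¹) := by
    intro x hx
    have h1 : (1 + c * x⁻¹) = x⁻¹ * (x + c) := by field_simp
    have hx0 : quadraticChar F x ≠ 0 := fun h =>
      hx (quadraticChar_eq_zero_iff.mp h)
    have h2 : quadraticChar F x⁻¹ = quadraticChar F x := by
      apply mul_left_cancel₀ hx0
      rw [← map_mul, mul_inv_cancel₀ hx, map_one, ← pow_two, quadraticChar_sq_one hx]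
    rw [h1, map_mul, h2, mul_comm]
  have step1 : ∑ x : F, quadraticChar F x * quadraticChar F (x + c)
      = ∑ x ∈ univ.filter (fun x : F => x ≠ 0),
          quadraticChar F x * quadraticChar F (x + c) := by
    symm
    apply Finset.sum_filter_of_ne
    intro x _ hne
    intro h0
    apply hne
    rw [h0, quadraticChar_zero, zero_mul]
  have step2 : ∑ x ∈ univ.filter (fun x : F => x ≠ 0),
        quadraticChar F x * quadraticChar F (x + c)
      = ∑ u ∈ univ.filter (fun u : F => u ≠ 1), quadraticChar F u := by
    apply Finset.sum_nbij' (fun x => 1 + c * x⁻¹) (fun u => c * (u - 1)⁻¹)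
    · intro x hx
      simp only [mem_filter, mem_univ, true_and] at hx ⊢
      intro h
      apply hx
      have : c * x⁻¹ = 0 := by linear_combination h
      rcases mul_eq_zero.mp this with h' | h'
      · exact absurd h' hc
      · exact inv_eq_zero.mp h'
    · intro u hu
      simp only [mem_filter, mem_univ, true_and] at hu ⊢
      exact mul_ne_zero hc (inv_ne_zero (sub_ne_zero.mpr hu))
    · intro x hx
      simp only [mem_filter, mem_univ, true_and] at hx
      field_simp
      rw [add_sub_cancel_left, div_self hc]
    · intro u hu
      simp only [mem_filter, mem_univ, true_and] at hu
      have : u - 1 ≠ 0 := sub_ne_zero.mpr hu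
      field_simp
      ring
    · intro x hx
      simp only [mem_filter, mem_univ, true_and] at hx
      exact key x hx
  have step3 : ∑ u ∈ univ.filter (fun u : F => u ≠ 1), quadraticChar F u
      = (∑ u : F, quadraticChar F u) - quadraticChar F 1 := by
    rw [Finset.filter_ne', Finset.sum_erase_eq_sub (Finset.mem_univ 1)]
  rw [step1, step2, step3, quadraticChar_sum_zero hF, map_one]
  ring

open Finset in
private lemma qc_pair {F : Type} [Field F] [Fintype F] [DecidableEq F]
    (hF : ringChar F ≠ 2) (b b' : F)
    (hshift : ∀ {c : F}, c ≠ 0 →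
      ∑ x : F, quadraticChar F x * quadraticChar F (x + c) = -1) :
    ∑ x : F, ((quadraticChar F (x + b) : ℝ)) * ((quadraticChar F (x + b') : ℝ))
      ≤ if b = b' then (Fintype.card F : ℝ) else 0 := by
  have hsub : ∑ x : F, ((quadraticChar F (x + b) : ℝ)) * ((quadraticChar F (x + b') : ℝ))
      = ∑ t : F, ((quadraticChar F t : ℝ)) * ((quadraticChar F (t + (b' - b)) : ℝ)) := by
    apply Fintype.sum_equiv (Equiv.addRight b)
    intro x
    have h : x + b + (b' - b) = x + b' := by ring
    simp [Equiv.addRight, h]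
  rcases eq_or_ne b b' with rfl | hne
  · simp only [if_pos rfl, hsub, sub_self, add_zero]
    calc ∑ t : F, ((quadraticChar F t : ℝ)) * ((quadraticChar F t : ℝ))
        ≤ ∑ _t : F, (1 : ℝ) := by
          apply Finset.sum_le_sum
          intro t _
          rcases eq_or_ne t 0 with rfl | ht
          · simp [quadraticChar_zero]
          · have := quadraticChar_sq_one (F := F) ht
            have h2 : ((quadraticChar F t : ℝ)) ^ 2 = 1 := by
              rw [← Int.cast_pow, this]; norm_num
            nlinarith [h2]
      _ = (Fintype.card F : ℝ) := by simp
  · rw [if_neg hne, hsub]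
    have hc : b' - b ≠ 0 := sub_ne_zero.mpr (Ne.symm hne)
    have h1 : ∑ t : F, ((quadraticChar F t : ℝ)) * ((quadraticChar F (t + (b' - b)) : ℝ))
        = ((∑ t : F, quadraticChar F t * quadraticChar F (t + (b' - b)) : ℤ) : ℝ) := by
      push_cast
      rfl
    rw [h1, hshift hc]
    norm_num

open Finset in
private lemma second_moment {F : Type} [Field F] [Fintype F] [DecidableEq F]
    (hF : ringChar F ≠ 2) (B : Finset F)
    (hshift : ∀ {c : F}, c ≠ 0 →
      ∑ x : F, quadraticChar F x * quadraticChar F (x + c) = -1) :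
    ∑ x : F, (∑ b ∈ B, (quadraticChar F (x + b) : ℝ)) ^ 2
      ≤ (Fintype.card F : ℝ) ^ 2 := by
  set q : ℝ := (Fintype.card F : ℝ) with hq
  have hB : (B.card : ℝ) ≤ q := by
    exact_mod_cast Nat.cast_le.mpr (Finset.card_le_univ B)
  have hq0 : (0:ℝ) ≤ q := by positivity
  calc ∑ x : F, (∑ b ∈ B, (quadraticChar F (x + b) : ℝ)) ^ 2
      = ∑ x : F, ∑ b ∈ B, ∑ b' ∈ B,
          ((quadraticChar F (x + b) : ℝ)) * ((quadraticChar F (x + b') : ℝ)) := by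
        refine Finset.sum_congr rfl fun x _ => ?_
        rw [sq, Finset.sum_mul_sum]
    _ = ∑ b ∈ B, ∑ x : F, ∑ b' ∈ B,
          ((quadraticChar F (x + b) : ℝ)) * ((quadraticChar F (x + b') : ℝ)) := by
        rw [Finset.sum_comm]
    _ = ∑ b ∈ B, ∑ b' ∈ B, ∑ x : F,
          ((quadraticChar F (x + b) : ℝ)) * ((quadraticChar F (x + b') : ℝ)) := by
        refine Finset.sum_congr rfl fun b _ => ?_
        rw [Finset.sum_comm]
    _ ≤ ∑ b ∈ B, ∑ b' ∈ B, (if b = b' then q else 0) := by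
        refine Finset.sum_le_sum fun b _ => Finset.sum_le_sum fun b' _ => ?_
        exact qc_pair hF b b' hshift
    _ = ∑ b ∈ B, q := by
        refine Finset.sum_congr rfl fun b hb => ?_
        rw [Finset.sum_ite_eq B b (fun _ => q), if_pos hb]
    _ = (B.card : ℝ) * q := by rw [Finset.sum_const, nsmul_eq_mul]
    _ ≤ q ^ 2 := by nlinarith

open Finset in
/-- The bipartite graphs on `F × F` with edge relation `∃ z, x + y = z²` over finite
fields of odd cardinality `q` are eventually `ε`-homogeneous of density `1/2`: for
every `ε > 0` there is `Q` such that for every finite field `F` with `|F| = q` odd,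
`q ≥ Q`, and all `A, B ⊆ F`,
`| |{(x,y) ∈ A × B : ∃ z, x + y = z²}| − (1/2)|A||B| | ≤ ε q²`. -/
theorem stmt_15 (ε : ℝ) (hε : 0 < ε) :
    ∃ Q : ℕ, ∀ (F : Type) [Field F] [Fintype F],
      Odd (Fintype.card F) → Q ≤ Fintype.card F →
      ∀ A B : Finset F,
        |((((A ×ˢ B).filter (fun p : F × F => ∃ z : F, p.1 + p.2 = z ^ 2)).card : ℝ))
            - (1 / 2) * A.card * B.card|
          ≤ ε * (Fintype.card F : ℝ) ^ 2 := by
  refine ⟨⌈ε⁻¹ ^ 2⌉₊ + 1, ?_⟩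
  intro F _ _ hodd hQ A B
  set q : ℝ := (Fintype.card F : ℝ) with hqdef
  have hF2 : ringChar F ≠ 2 := by
    intro h
    have h0 := FiniteField.even_card_iff_char_two.mp h
    have h1 := Nat.odd_iff.mp hodd
    omega
  have hshift : ∀ {c : F}, c ≠ 0 →
      ∑ x : F, quadraticChar F x * quadraticChar F (x + c) = -1 :=
    fun hc => qc_shift hF2 hc
  have hq1 : (1:ℝ) ≤ q := by
    have : 1 ≤ Fintype.card F := by omega
    rw [hqdef]; exact_mod_cast this
  have hq0 : (0:ℝ) ≤ q := by linarith
  have hqeps : ε⁻¹ ^ 2 ≤ q := by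
    have h1 : (⌈ε⁻¹ ^ 2⌉₊ : ℕ) ≤ Fintype.card F := by omega
    calc ε⁻¹ ^ 2 ≤ (⌈ε⁻¹ ^ 2⌉₊ : ℝ) := Nat.le_ceil _
      _ ≤ q := by rw [hqdef]; exact_mod_cast h1
  have hA : (A.card : ℝ) ≤ q := by rw [hqdef]; exact_mod_cast Finset.card_le_univ A
  have hB : (B.card : ℝ) ≤ q := by rw [hqdef]; exact_mod_cast Finset.card_le_univ B
  -- indicator identity
  have he : ∀ u : F, (if ∃ z : F, u = z ^ 2 then (1:ℝ) else 0)
      = 1/2 + (quadraticChar F u : ℝ)/2 + (if u = 0 then (1:ℝ)/2 else 0) := by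
    intro u
    rcases eq_or_ne u 0 with rfl | h
    · rw [if_pos ⟨0, by ring⟩, if_pos rfl, quadraticChar_zero]
      norm_num
    · rw [if_neg h]
      have hiff : (∃ z : F, u = z ^ 2) ↔ IsSquare u := by
        constructor
        · rintro ⟨z, rfl⟩; exact ⟨z, pow_two z⟩
        · rintro ⟨r, rfl⟩; exact ⟨r, (pow_two r).symm⟩
      by_cases hs : IsSquare u
      · rw [if_pos (hiff.mpr hs), (quadraticChar_one_iff_isSquare h).mpr hs]
        norm_num
      · rw [if_neg (fun hh => hs (hiff.mp hh)),
          quadraticChar_neg_one_iff_not_isSquare.mpr hs]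
        push_cast
        norm_num
  set S : F → ℝ := fun x => ∑ b ∈ B, (quadraticChar F (x + b) : ℝ) with hSdef
  set T : ℝ := ∑ a ∈ A, S a with hTdef
  set N : ℝ := ∑ a ∈ A, ∑ b ∈ B, (if a + b = 0 then (1:ℝ) else 0) with hNdef
  -- counting identity
  have hcount : ((((A ×ˢ B).filter
        (fun p : F × F => ∃ z : F, p.1 + p.2 = z ^ 2)).card : ℝ))
      = ∑ a ∈ A, ∑ b ∈ B, (if ∃ z : F, a + b = z ^ 2 then (1:ℝ) else 0) := by
    rw [Finset.card_filter]
    push_cast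
    rw [Finset.sum_product]
  have hmain : ((((A ×ˢ B).filter
        (fun p : F × F => ∃ z : F, p.1 + p.2 = z ^ 2)).card : ℝ))
      - (1 / 2) * A.card * B.card = T / 2 + N / 2 := by
    rw [hcount]
    have step : ∀ a ∈ A, ∑ b ∈ B, (if ∃ z : F, a + b = z ^ 2 then (1:ℝ) else 0)
        = (B.card : ℝ) * (1/2) + S a / 2
          + (∑ b ∈ B, (if a + b = 0 then (1:ℝ) else 0)) / 2 := by
      intro a _
      have e0 : ∑ b ∈ B, (if ∃ z : F, a + b = z ^ 2 then (1:ℝ) else 0)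
          = ∑ b ∈ B, (1/2 + (quadraticChar F (a + b) : ℝ)/2
              + (if a + b = 0 then (1:ℝ)/2 else 0)) :=
        Finset.sum_congr rfl fun b _ => he (a + b)
      rw [e0, Finset.sum_add_distrib, Finset.sum_add_distrib]
      congr 1
      · congr 1
        · rw [Finset.sum_const, nsmul_eq_mul]
        · rw [hSdef, ← Finset.sum_div]
      · rw [Finset.sum_div]
        refine Finset.sum_congr rfl fun b _ => ?_
        split_ifs <;> norm_num
    rw [Finset.sum_congr rfl step, Finset.sum_add_distrib, Finset.sum_add_distrib,
      Finset.sum_const, nsmul_eq_mul, hTdef, ← Finset.sum_div, hNdef, ← Finset.sum_div]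
    ring
  -- bound on N
  have hN0 : 0 ≤ N := by
    rw [hNdef]
    refine Finset.sum_nonneg fun a _ => Finset.sum_nonneg fun b _ => ?_
    split_ifs <;> norm_num
  have hN : N ≤ q := by
    rw [hNdef]
    calc ∑ a ∈ A, ∑ b ∈ B, (if a + b = 0 then (1:ℝ) else 0)
        ≤ ∑ a ∈ A, (1:ℝ) := by
          refine Finset.sum_le_sum fun a _ => ?_
          have e1 : ∀ b : F, (a + b = 0) = (b = -a) := by
            intro b
            simp only [eq_iff_iff]
            constructor
            · intro h; linear_combination h
            · intro h; rw [h]; ring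
          simp only [e1]
          rw [Finset.sum_ite_eq' B (-a) (fun _ => (1:ℝ))]
          split_ifs <;> norm_num
      _ = (A.card : ℝ) := by simp
      _ ≤ q := hA
  -- bound on T
  have hT : |T| ≤ Real.sqrt q * q := by
    have habs : |T| ≤ ∑ a ∈ A, |S a| := Finset.abs_sum_le_sum_abs _ _
    have hcs : (∑ a ∈ A, |S a|) ^ 2 ≤ (A.card : ℝ) * ∑ a ∈ A, S a ^ 2 := by
      have h := Finset.sum_mul_sq_le_sq_mul_sq A (fun _ => (1:ℝ)) (fun a => |S a|)
      simpa [sq_abs] using h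
    have hext : ∑ a ∈ A, S a ^ 2 ≤ ∑ x : F, S x ^ 2 :=
      Finset.sum_le_sum_of_subset_of_nonneg (Finset.subset_univ A)
        (fun _ _ _ => sq_nonneg _)
    have hsm : ∑ x : F, S x ^ 2 ≤ q ^ 2 := second_moment hF2 B hshift
    have h0 : (0:ℝ) ≤ ∑ a ∈ A, S a ^ 2 :=
      Finset.sum_nonneg fun _ _ => sq_nonneg _
    have h3 : (∑ a ∈ A, |S a|) ^ 2 ≤ q ^ 3 := by nlinarith
    have h4 : ∑ a ∈ A, |S a| ≤ Real.sqrt (q ^ 3) := by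
      have e : ∑ a ∈ A, |S a| = Real.sqrt ((∑ a ∈ A, |S a|) ^ 2) := by
        rw [Real.sqrt_sq (Finset.sum_nonneg fun _ _ => abs_nonneg _)]
      rw [e]
      exact Real.sqrt_le_sqrt h3
    have h5 : Real.sqrt (q ^ 3) = Real.sqrt q * q := by
      rw [show q ^ 3 = q * q ^ 2 by ring, Real.sqrt_mul hq0, Real.sqrt_sq hq0]
    calc |T| ≤ ∑ a ∈ A, |S a| := habs
      _ ≤ Real.sqrt (q ^ 3) := h4
      _ = Real.sqrt q * q := h5
  -- finish
  have hsq : Real.sqrt q * Real.sqrt q = q := Real.mul_self_sqrt hq0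
  have hs0 : 0 ≤ Real.sqrt q := Real.sqrt_nonneg q
  have hs1 : 1 ≤ Real.sqrt q := by nlinarith
  have heps : ε⁻¹ ≤ Real.sqrt q := by nlinarith [inv_nonneg.mpr hε.le]
  have hepsmul : 1 ≤ ε * Real.sqrt q := by
    have := mul_le_mul_of_nonneg_left heps hε.le
    rwa [mul_inv_cancel₀ hε.ne'] at this
  calc |((((A ×ˢ B).filter (fun p : F × F => ∃ z : F, p.1 + p.2 = z ^ 2)).card : ℝ))
        - (1 / 2) * A.card * B.card| = |T / 2 + N / 2| := by rw [hmain]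
    _ ≤ |T / 2| + |N / 2| := abs_add_le _ _
    _ = |T| / 2 + N / 2 := by
        rw [abs_div, abs_div, abs_two, abs_of_nonneg hN0]
    _ ≤ (Real.sqrt q * q) / 2 + q / 2 := by
        have := hT
        linarith
    _ ≤ ε * q ^ 2 := by
        have h7 : Real.sqrt q * q ≤ ε * q ^ 2 := by
          calc Real.sqrt q * q = 1 * (Real.sqrt q * q) := by ring
            _ ≤ (ε * Real.sqrt q) * (Real.sqrt q * q) :=
                mul_le_mul_of_nonneg_right hepsmul (mul_nonneg hs0 hq0)
            _ = ε * (Real.sqrt q * Real.sqrt q) * q := by ring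
            _ = ε * q ^ 2 := by rw [hsq]; ring
        have h8 : q ≤ Real.sqrt q * q := by nlinarith
        linarith
end
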